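/- Let (ℤⁿ, w) be a weighted grid graph and x ∈ ℤⁿ. Then the scalar curvature satisfies R(x) = Σ_{i=1}^{n} ( w(x, x+e_i) − w(x+e_i, x+2e_i) + w(x, x−e_i) − w(x−e_i, x−2e_i) ) − Abs(x). -/

import Mathlib

open Filter Topology

noncomputable section

namespace PMT

/-- The `i`-th standard unit vector in `ℤⁿ`. -/
def e (n : ℕ) (i : Fin n) : Fin n → ℤ := fun j => if j = i then 1 else 0

/-- The grid graph on `ℤⁿ`: `x ∼ y` iff `‖x − y‖₁ = 1`. -/
def grid (n : ℕ) : SimpleGraph (Fin n → ℤ) where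
  Adj x y := (∑ i, |x i - y i|) = 1
  symm := by
    constructor
    intro x y h
    beta_reduce at h ⊢
    have h' : ∀ i ∈ Finset.univ, |y i - x i| = |x i - y i| :=
      fun i _ => abs_sub_comm _ _
    rw [Finset.sum_congr rfl h']
    exact h
  loopless := by constructor; intro x h; simp at h

/-- The graph Laplacian `Δf(x) = Σ_{y∼x} w(x,y)(f(y)−f(x))` of an integer-valued function. -/
def lap {V : Type*} (G : SimpleGraph V) (w : V → V → ℝ) (f : V → ℤ) (x : V) : ℝ :=
  ∑ᶠ y ∈ {y | G.Adj x y}, w x y * ((f y : ℝ) - (f x : ℝ))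

/-- `f : V → ℤ` is 1-Lipschitz with respect to the combinatorial graph distance. -/
def Lip1 {V : Type*} (G : SimpleGraph V) (f : V → ℤ) : Prop :=
  ∀ x y, |f x - f y| ≤ (G.dist x y : ℤ)

/-- Ollivier curvature of the pair `(x, y)`:
`κ(x,y) = inf {Δf(x) − Δf(y) | f : V → ℤ, f 1-Lipschitz, f(y) = f(x) + 1}`. -/
def kappa {V : Type*} (G : SimpleGraph V) (w : V → V → ℝ) (x y : V) : ℝ :=
  sInf {r | ∃ f : V → ℤ, Lip1 G f ∧ f y = f x + 1 ∧ r = lap G w f x - lap G w f y}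

/-- Scalar curvature `R(x) = Σ_{y∼x} κ(x,y)`. -/
def scal {V : Type*} (G : SimpleGraph V) (w : V → V → ℝ) (x : V) : ℝ :=
  ∑ᶠ y ∈ {y | G.Adj x y}, kappa G w x y

/-- A weighted grid graph `(ℤⁿ, w)`: symmetric weights, positive on edges. -/
structure GridWeight (n : ℕ) where
  w : (Fin n → ℤ) → (Fin n → ℤ) → ℝ
  symm : ∀ x y, w x y = w y x
  pos : ∀ x y, (grid n).Adj x y → 0 < w x y

/-- The quantity `Abs(x)` measuring the distortion from the standard grid graph. -/
def Absf (n : ℕ) (w : (Fin n → ℤ) → (Fin n → ℤ) → ℝ) (x : Fin n → ℤ) : ℝ :=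
  ∑ i, ∑ j, if i ≠ j then
      (|w x (x + e n i) - w (x + e n j) (x + e n j + e n i)| +
       |w x (x + e n i) - w (x - e n j) (x - e n j + e n i)| +
       |w x (x - e n i) - w (x + e n j) (x + e n j - e n i)| +
       |w x (x - e n i) - w (x - e n j) (x - e n j - e n i)|)
    else 0

/-- The `ℓ^∞` norm `‖x‖_∞` of `x ∈ ℤⁿ`, as a natural number. -/
def nInf {n : ℕ} (x : Fin n → ℤ) : ℕ := Finset.univ.sup fun i => (x i).natAbs

/-- The cube `Q_r = {y ∈ ℤⁿ : ‖y‖∞ ≤ r}` as a finset. -/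
def Qr (n r : ℕ) : Finset (Fin n → ℤ) := Finset.Icc (fun _ => -(r : ℤ)) (fun _ => (r : ℤ))

/-- `Σ_{e ∈ E_r} w(e)`: the sum of weights of edges with exactly one endpoint in `Q_r`
(each such edge is counted once, via its endpoint inside `Q_r`). -/
def ErSum (n : ℕ) (w : (Fin n → ℤ) → (Fin n → ℤ) → ℝ) (r : ℕ) : ℝ :=
  ∑ x ∈ Qr n r, ∑ i,
    ((if x + e n i ∉ Qr n r then w x (x + e n i) else 0) +
     (if x - e n i ∉ Qr n r then w x (x - e n i) else 0))

/-- `Σ_{τ ∈ Ẽ_r} w(τ)`: the sum of weights of edges joining the sphere `S_{r+1}` to the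
sphere `S_{r+2}` (each such edge is counted once, via its endpoint in `S_{r+1}`). -/
def TErSum (n : ℕ) (w : (Fin n → ℤ) → (Fin n → ℤ) → ℝ) (r : ℕ) : ℝ :=
  ∑ x ∈ Qr n (r + 1), if nInf x = r + 1 then
      (∑ i, ((if nInf (x + e n i) = r + 2 then w x (x + e n i) else 0) +
             (if nInf (x - e n i) = r + 2 then w x (x - e n i) else 0)))
    else 0

/-- The weighted grid graph `(ℤⁿ, w)` is asymptotically flat: there is `p > n` with
`w = 1 + o(1)`, `Abs(x) = O(‖x‖∞^{−p})` and `|R(x)| = O(‖x‖∞^{−p})` as `‖x‖∞ → ∞`. -/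
def AsympFlatGrid (n : ℕ) (W : GridWeight n) : Prop :=
  ∃ p : ℝ, (n : ℝ) < p ∧
    (∀ ε : ℝ, 0 < ε → ∃ M : ℕ, ∀ x y, (grid n).Adj x y → M ≤ nInf x → |W.w x y - 1| ≤ ε) ∧
    (∃ C : ℝ, ∃ M : ℕ, 0 < M ∧ ∀ x, M ≤ nInf x → Absf n W.w x ≤ C * (nInf x : ℝ) ^ (-p)) ∧
    (∃ C : ℝ, ∃ M : ℕ, 0 < M ∧ ∀ x, M ≤ nInf x → |scal (grid n) W.w x| ≤ C * (nInf x : ℝ) ^ (-p))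

/-! ### Auxiliary lemmas for the scalar curvature formula -/

section ScalAux

variable {n : ℕ}

lemma grid_adj_iff' {x z : Fin n → ℤ} :
    (grid n).Adj x z ↔ (∑ i, |x i - z i|) = 1 := Iff.rfl

lemma exists_coord {x z : Fin n → ℤ} (h : (grid n).Adj x z) :
    ∃ i₀, |x i₀ - z i₀| = 1 ∧ ∀ j, j ≠ i₀ → x j = z j := by
  have hsum : (∑ i, |x i - z i|) = 1 := h
  obtain ⟨i₀, -, hne⟩ := Finset.exists_ne_zero_of_sum_ne_zero (by rw [hsum]; norm_num :
    (∑ i, |x i - z i|) ≠ 0)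
  have hle : |x i₀ - z i₀| ≤ 1 := by
    have h2 : |x i₀ - z i₀| ≤ ∑ i, |x i - z i| :=
      Finset.single_le_sum (f := fun i => |x i - z i|) (fun i _ => abs_nonneg _) (Finset.mem_univ i₀)
    omega
  have h1 : |x i₀ - z i₀| = 1 := le_antisymm hle (by
    have := abs_nonneg (x i₀ - z i₀); omega)
  refine ⟨i₀, h1, fun j hj => ?_⟩
  have hrest : (∑ i ∈ Finset.univ.erase i₀, |x i - z i|) = 0 := by
    have h2 : |x i₀ - z i₀| + ∑ i ∈ Finset.univ.erase i₀, |x i - z i| = ∑ i, |x i - z i| :=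
      Finset.add_sum_erase Finset.univ (fun i => |x i - z i|) (Finset.mem_univ i₀)
    omega
  have := (Finset.sum_eq_zero_iff_of_nonneg (fun i _ => abs_nonneg (x i - z i))).1 hrest
    j (Finset.mem_erase.2 ⟨hj, Finset.mem_univ j⟩)
  have := abs_eq_zero.1 this
  omega

lemma adj_of_delta (x : Fin n → ℤ) (i₀ : Fin n) (v : Fin n → ℤ)
    (h1 : |v i₀| = 1) (h0 : ∀ j, j ≠ i₀ → v j = 0) : (grid n).Adj x (x + v) := by
  rw [grid_adj_iff']
  have hc : ∀ i, |x i - (x + v) i| = |v i| := by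
    intro i
    rw [Pi.add_apply, ← abs_neg]
    ring_nf
  rw [Finset.sum_congr rfl fun i _ => hc i,
    ← Finset.add_sum_erase Finset.univ _ (Finset.mem_univ i₀), h1,
    Finset.sum_eq_zero, add_zero]
  intro j hj
  rw [h0 j (Finset.ne_of_mem_erase hj), abs_zero]

lemma grid_reachable (u v : Fin n → ℤ) : (grid n).Reachable u v := by
  generalize hm : (∑ i, |u i - v i|).toNat = m
  induction m generalizing u with
  | zero =>
    have hnn : 0 ≤ ∑ i, |u i - v i| := Finset.sum_nonneg fun i _ => abs_nonneg _
    have h0 : (∑ i, |u i - v i|) = 0 := by omega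
    have hz := (Finset.sum_eq_zero_iff_of_nonneg (fun i _ => abs_nonneg (u i - v i))).1 h0
    have : u = v := funext fun i => by
      have := abs_eq_zero.1 (hz i (Finset.mem_univ i)); omega
    exact this ▸ SimpleGraph.Reachable.refl u
  | succ m ih =>
    have hpos : (∑ i, |u i - v i|) ≠ 0 := by omega
    obtain ⟨i₀, -, hne⟩ := Finset.exists_ne_zero_of_sum_ne_zero hpos
    set s : ℤ := if u i₀ < v i₀ then 1 else -1 with hs
    set u' : Fin n → ℤ := u + (fun j => if j = i₀ then s else 0) with hu'
    have hadj : (grid n).Adj u u' := by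
      refine adj_of_delta u i₀ _ ?_ ?_
      · show |if i₀ = i₀ then s else 0| = 1
        rw [if_pos rfl, hs]
        rcases lt_or_ge (u i₀) (v i₀) with h | h
        · rw [if_pos h]; rfl
        · rw [if_neg (not_lt.2 h)]; rfl
      · intro j hj
        show (if j = i₀ then s else 0) = 0
        rw [if_neg hj]
    have hu'i : u' i₀ = u i₀ + s := by simp [hu']
    have hu'j : ∀ j, j ≠ i₀ → u' j = u j := by intro j hj; simp [hu', hj]
    have hkey : |u' i₀ - v i₀| = |u i₀ - v i₀| - 1 := by
      rw [hu'i]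
      have hne' : u i₀ ≠ v i₀ := fun hh => hne (by rw [hh]; simp)
      rcases lt_or_ge (u i₀) (v i₀) with h | h
      · rw [hs, if_pos h]
        rw [abs_of_nonpos (by omega), abs_of_nonpos (by omega)]; ring
      · have h' : v i₀ < u i₀ := lt_of_le_of_ne h (Ne.symm hne')
        rw [hs, if_neg (not_lt.2 h)]
        rw [abs_of_nonneg (by omega), abs_of_nonneg (by omega)]; ring
    have hsum' : (∑ i, |u' i - v i|).toNat = m := by
      have e1 : |u' i₀ - v i₀| + ∑ i ∈ Finset.univ.erase i₀, |u' i - v i| = ∑ i, |u' i - v i| :=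
        Finset.add_sum_erase Finset.univ (fun i => |u' i - v i|) (Finset.mem_univ i₀)
      have e2 : |u i₀ - v i₀| + ∑ i ∈ Finset.univ.erase i₀, |u i - v i| = ∑ i, |u i - v i| :=
        Finset.add_sum_erase Finset.univ (fun i => |u i - v i|) (Finset.mem_univ i₀)
      have hnn' : 0 ≤ ∑ i, |u' i - v i| := Finset.sum_nonneg fun i _ => abs_nonneg _
      have hnn : 0 ≤ ∑ i, |u i - v i| := Finset.sum_nonneg fun i _ => abs_nonneg _
      have erest : (∑ i ∈ Finset.univ.erase i₀, |u' i - v i|)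
          = ∑ i ∈ Finset.univ.erase i₀, |u i - v i| :=
        Finset.sum_congr rfl fun j hj => by
          rw [hu'j j (Finset.ne_of_mem_erase hj)]
      have habs : 1 ≤ |u i₀ - v i₀| := by
        have := abs_nonneg (u i₀ - v i₀)
        have : |u i₀ - v i₀| ≠ 0 := fun hh => hne (by
          have := abs_eq_zero.1 hh; omega)
        omega
      omega
    exact (SimpleGraph.Adj.reachable hadj).trans (ih u' hsum')

lemma abs_sub_le_walk_length {V : Type*} {G : SimpleGraph V} (f : V → ℤ)
    (hf : ∀ a b, G.Adj a b → |f a - f b| ≤ 1) {u v : V} (p : G.Walk u v) :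
    |f u - f v| ≤ (p.length : ℤ) := by
  induction p with
  | nil => simp
  | @cons a b c h p ih =>
    have h1 := hf a b h
    have h2 : |f a - f c| ≤ |f a - f b| + |f b - f c| := abs_sub_le _ _ _
    simp only [SimpleGraph.Walk.length_cons]
    push_cast
    omega

lemma lip1_of_step (f : (Fin n → ℤ) → ℤ)
    (hf : ∀ a b, (grid n).Adj a b → |f a - f b| ≤ 1) : Lip1 (grid n) f := by
  intro u v
  obtain ⟨p, hp⟩ := (grid_reachable u v).exists_walk_length_eq_dist
  calc |f u - f v| ≤ (p.length : ℤ) := abs_sub_le_walk_length f hf p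
  _ = _ := by rw [hp]

lemma lip1_adj {V : Type*} {G : SimpleGraph V} {f : V → ℤ} (hf : Lip1 G f)
    {u v : V} (h : G.Adj u v) : |f u - f v| ≤ 1 := by
  have hd : G.dist u v ≤ 1 := by
    have := SimpleGraph.dist_le (SimpleGraph.Walk.cons h SimpleGraph.Walk.nil)
    simpa using this
  calc |f u - f v| ≤ (G.dist u v : ℤ) := hf u v
  _ ≤ 1 := by exact_mod_cast hd

end ScalAux

section ScalAux2

variable {n : ℕ}

lemma adj_iff_e {x z : Fin n → ℤ} :
    (grid n).Adj x z ↔ ∃ i, z = x + e n i ∨ z = x - e n i := by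
  constructor
  · intro h
    obtain ⟨i₀, h1, h0⟩ := exists_coord h
    rcases abs_eq (by norm_num : (0:ℤ) ≤ 1) |>.1 h1 with hh | hh
    · exact ⟨i₀, Or.inr (funext fun j => by
        by_cases hj : j = i₀
        · subst hj; simp [e]; omega
        · simp [e, hj, h0 j hj])⟩
    · exact ⟨i₀, Or.inl (funext fun j => by
        by_cases hj : j = i₀
        · subst hj; simp [e]; omega
        · simp [e, hj, h0 j hj])⟩
  · rintro ⟨i, rfl | rfl⟩
    · exact adj_of_delta x i _ (by simp [e]) (fun j hj => by simp [e, hj])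
    · have : x - e n i = x + (-(e n i)) := by ring
      rw [this]
      exact adj_of_delta x i _ (by simp [e]) (fun j hj => by simp [e, hj])

lemma add_e_ne_add_e {x : Fin n → ℤ} {i j : Fin n} (h : i ≠ j) :
    x + e n i ≠ x + e n j := fun hh => by
  have := congrFun hh i
  simp [e, h] at this

lemma add_e_ne_sub_e {x : Fin n → ℤ} (i j : Fin n) :
    x + e n i ≠ x - e n j := fun hh => by
  have := congrFun hh i
  simp [e] at this
  by_cases hij : i = j <;> simp [hij] at this <;> omega

lemma sub_e_ne_sub_e {x : Fin n → ℤ} {i j : Fin n} (h : i ≠ j) :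
    x - e n i ≠ x - e n j := fun hh => by
  have := congrFun hh i
  simp [e, h] at this

/-- The neighborhood of `x` in the grid, as a finset. -/
def nbr (n : ℕ) (x : Fin n → ℤ) : Finset (Fin n → ℤ) :=
  (Finset.univ.image fun i => x + e n i) ∪ (Finset.univ.image fun i => x - e n i)

lemma nbr_coe (x : Fin n → ℤ) : {z | (grid n).Adj x z} = ↑(nbr n x) := by
  ext z
  simp only [Set.mem_setOf_eq, nbr, Finset.coe_union, Set.mem_union, Finset.coe_image,
    Finset.coe_univ, Set.image_univ, Set.mem_range, adj_iff_e]
  constructor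
  · rintro ⟨i, h | h⟩
    · exact Or.inl ⟨i, h.symm⟩
    · exact Or.inr ⟨i, h.symm⟩
  · rintro (⟨i, h⟩ | ⟨i, h⟩)
    · exact ⟨i, Or.inl h.symm⟩
    · exact ⟨i, Or.inr h.symm⟩

lemma sum_nbr (x : Fin n → ℤ) (F : (Fin n → ℤ) → ℝ) :
    (∑ z ∈ nbr n x, F z) = ∑ i, (F (x + e n i) + F (x - e n i)) := by
  rw [nbr, Finset.sum_union, Finset.sum_image, Finset.sum_image, ← Finset.sum_add_distrib]
  · intro i _ j _ hh
    by_contra hij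
    exact sub_e_ne_sub_e hij hh
  · intro i _ j _ hh
    by_contra hij
    exact add_e_ne_add_e hij hh
  · rw [Finset.disjoint_left]
    rintro a ha hb
    simp only [Finset.mem_image, Finset.mem_univ, true_and] at ha hb
    obtain ⟨i, rfl⟩ := ha
    obtain ⟨j, hj⟩ := hb
    exact add_e_ne_sub_e i j hj.symm

lemma finsum_nbr (x : Fin n → ℤ) (F : (Fin n → ℤ) → ℝ) :
    (∑ᶠ z ∈ {z | (grid n).Adj x z}, F z) = ∑ i, (F (x + e n i) + F (x - e n i)) := by
  rw [nbr_coe, finsum_mem_coe_finset, sum_nbr]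

lemma lap_eq (w : (Fin n → ℤ) → (Fin n → ℤ) → ℝ) (f : (Fin n → ℤ) → ℤ) (x : Fin n → ℤ) :
    lap (grid n) w f x = ∑ i, (w x (x + e n i) * ((f (x + e n i) : ℝ) - (f x : ℝ))
      + w x (x - e n i) * ((f (x - e n i) : ℝ) - (f x : ℝ))) :=
  finsum_nbr x _

lemma scal_eq (w : (Fin n → ℤ) → (Fin n → ℤ) → ℝ) (x : Fin n → ℤ) :
    scal (grid n) w x = ∑ i, (kappa (grid n) w x (x + e n i) + kappa (grid n) w x (x - e n i)) :=
  finsum_nbr x _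

lemma key_ineq (w1 w2 : ℝ) (hw1 : 0 ≤ w1) (a b : ℝ) (hb : |b| ≤ 1) (hab : b ≤ a) :
    -|w1 - w2| ≤ w1 * a - w2 * b := by
  have h1 : w1 * a - w2 * b = w1 * (a - b) + (w1 - w2) * b := by ring
  have h2 : (0:ℝ) ≤ w1 * (a - b) := mul_nonneg hw1 (by linarith)
  have h3 : -|w1 - w2| ≤ (w1 - w2) * b := by
    have := neg_abs_le ((w1 - w2) * b)
    have habs : |(w1 - w2) * b| ≤ |w1 - w2| := by
      rw [abs_mul]
      calc |w1 - w2| * |b| ≤ |w1 - w2| * 1 :=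
        mul_le_mul_of_nonneg_left hb (abs_nonneg _)
      _ = |w1 - w2| := mul_one _
    linarith
  linarith

/-- Integer clamp to `{0,1}`. -/
def cl : ℤ → ℤ := fun u => if 0 < u then 1 else 0

lemma cl_nonneg (u : ℤ) : 0 ≤ cl u := by unfold cl; split_ifs <;> omega
lemma cl_le_one (u : ℤ) : cl u ≤ 1 := by unfold cl; split_ifs <;> omega
lemma cl_zero : cl 0 = 0 := rfl
lemma cl_one : cl 1 = 1 := rfl
lemma cl_neg_one : cl (-1) = 0 := rfl

lemma cl_pair (a b m : ℤ) (hab : a = b + 1 ∨ b = a + 1) :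
    cl (a - m) - cl (b - m) = 0 ∨ cl (m - a) - cl (m - b) = 0 := by
  unfold cl
  split_ifs <;> omega

lemma sgn_spec (w1 w2 : ℝ) :
    (w1 - w2) * (((if w1 < w2 then 1 else if w2 < w1 then -1 else 0 : ℤ) : ℝ)) = -|w1 - w2| := by
  split_ifs with h1 h2
  · push_cast
    rw [abs_of_neg (by linarith)]
    ring
  · push_cast
    rw [abs_of_pos (by linarith)]
    ring
  · have h3 : w1 = w2 := le_antisymm (not_lt.1 h2) (not_lt.1 h1)
    rw [h3]
    simp

lemma sgn_abs_le (w1 w2 : ℝ) :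
    |(if w1 < w2 then 1 else if w2 < w1 then -1 else 0 : ℤ)| ≤ 1 := by
  split_ifs <;> decide

end ScalAux2
/-- Signed unit vector `ε·e_i`. -/
def dd (n : ℕ) (i : Fin n) (ε : ℤ) : Fin n → ℤ := fun j => if j = i then ε else 0

section ScalAux3

variable {n : ℕ}

lemma dd_one (i : Fin n) : dd n i 1 = e n i := rfl

lemma dd_neg_one (i : Fin n) : dd n i (-1) = -(e n i) := by
  funext j; by_cases h : j = i <;> simp [dd, e, h]

lemma adj_add_dd (z : Fin n → ℤ) (i : Fin n) {ε : ℤ} (hε : ε = 1 ∨ ε = -1) :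
    (grid n).Adj z (z + dd n i ε) := by
  refine adj_of_delta z i _ ?_ ?_
  · show |if i = i then ε else 0| = 1
    rcases hε with rfl | rfl <;> simp
  · intro j hj; show (if j = i then ε else 0) = 0; rw [if_neg hj]

lemma adj_sub_dd (z : Fin n → ℤ) (i : Fin n) {ε : ℤ} (hε : ε = 1 ∨ ε = -1) :
    (grid n).Adj z (z - dd n i ε) := by
  have h : z - dd n i ε = z + (-(dd n i ε)) := by ring
  rw [h]
  refine adj_of_delta z i _ ?_ ?_
  · show |(-(if i = i then ε else 0))| = 1
    rcases hε with rfl | rfl <;> simp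
  · intro j hj; show (-(if j = i then ε else 0)) = 0; rw [if_neg hj]; ring

lemma adj_add_e (z : Fin n → ℤ) (j : Fin n) : (grid n).Adj z (z + e n j) :=
  adj_iff_e.2 ⟨j, Or.inl rfl⟩

lemma adj_sub_e (z : Fin n → ℤ) (j : Fin n) : (grid n).Adj z (z - e n j) :=
  adj_iff_e.2 ⟨j, Or.inr rfl⟩

lemma kappa_lower (W : GridWeight n) (x : Fin n → ℤ) (i : Fin n) (ε : ℤ)
    (hε : ε = 1 ∨ ε = -1) (f : (Fin n → ℤ) → ℤ) (hf : Lip1 (grid n) f)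
    (hfy : f (x + dd n i ε) = f x + 1) :
    2 * W.w x (x + dd n i ε) - W.w x (x - dd n i ε)
      - W.w (x + dd n i ε) (x + dd n i ε + dd n i ε)
      - (∑ j, (if j ≠ i then
          |W.w x (x + e n j) - W.w (x + dd n i ε) (x + dd n i ε + e n j)| +
          |W.w x (x - e n j) - W.w (x + dd n i ε) (x + dd n i ε - e n j)| else 0))
      ≤ lap (grid n) W.w f x - lap (grid n) W.w f (x + dd n i ε) := by
  set w := W.w with hw
  set d := dd n i ε with hd
  set y := x + d with hy
  have hKdec : 2 * w x y - w x (x - d) - w y (y + d)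
      - (∑ j, (if j ≠ i then
          |w x (x + e n j) - w y (y + e n j)| + |w x (x - e n j) - w y (y - e n j)| else 0))
      = ∑ j, ((if j = i then 2 * w x y - w x (x - d) - w y (y + d) else 0)
          - (if j ≠ i then
              |w x (x + e n j) - w y (y + e n j)| + |w x (x - e n j) - w y (y - e n j)|
            else 0)) := by
    rw [Finset.sum_sub_distrib]
    congr 1
    simp
  rw [lap_eq, lap_eq, ← Finset.sum_sub_distrib, hKdec]
  refine Finset.sum_le_sum fun j _ => ?_
  by_cases hj : j = i
  · subst hj
    rw [if_pos rfl, if_neg (fun h => h rfl), sub_zero]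
    have hadj1 : (grid n).Adj x (x - d) := adj_sub_dd x j hε
    have hadj2 : (grid n).Adj y (y + d) := adj_add_dd y j hε
    have hfyR : (f y : ℝ) = (f x : ℝ) + 1 := by exact_mod_cast hfy
    have hpos1 : 0 < w x (x - d) := W.pos x (x - d) hadj1
    have hpos2 : 0 < w y (y + d) := W.pos y (y + d) hadj2
    have hsymm : w y x = w x y := W.symm y x
    have h1 : (-1 : ℝ) ≤ (f (x - d) : ℝ) - (f x : ℝ) := by
      have := lip1_adj hf hadj1
      rw [abs_le] at this
      have h1' : (-1 : ℤ) ≤ f (x - d) - f x := by omega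
      exact_mod_cast h1'
    have h2 : (f (y + d) : ℝ) - (f y : ℝ) ≤ 1 := by
      have := lip1_adj hf hadj2
      rw [abs_le] at this
      have h2' : f (y + d) - f y ≤ 1 := by omega
      exact_mod_cast h2'
    have p1 : w x (x - d) * (-1 : ℝ) ≤ w x (x - d) * ((f (x - d) : ℝ) - f x) :=
      mul_le_mul_of_nonneg_left h1 hpos1.le
    have p2 : w y (y + d) * ((f (y + d) : ℝ) - f y) ≤ w y (y + d) * 1 :=
      mul_le_mul_of_nonneg_left h2 hpos2.le
    rcases hε with rfl | rfl
    · have he : d = e n j := dd_one j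
      rw [← he, ← hy]
      have hyd : y - d = x := by rw [hy]; abel
      rw [hyd]
      have e1 : w x y * ((f y : ℝ) - f x) = w x y := by rw [hfyR]; ring
      have e2 : w y x * ((f x : ℝ) - f y) = -(w x y) := by rw [hfyR, hsymm]; ring
      rw [e1, e2]
      linarith
    · have he : e n j = -d := by rw [hd, dd_neg_one]; ring
      have q1 : x + e n j = x - d := by rw [he]; abel
      have q2 : x - e n j = y := by rw [he, hy]; abel
      have q3 : y + e n j = x := by rw [he, hy]; abel
      have q4 : y - e n j = y + d := by rw [he]; abel
      rw [q1, q2, q3, q4]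
      have e1 : w x y * ((f y : ℝ) - f x) = w x y := by rw [hfyR]; ring
      have e2 : w y x * ((f x : ℝ) - f y) = -(w x y) := by rw [hfyR, hsymm]; ring
      rw [e1, e2]
      linarith
  · simp only [if_neg hj, if_pos hj, zero_sub]
    -- goal: -(B1 + B2) ≤ T j
    have hadjp : (grid n).Adj (x + e n j) (y + e n j) := by
      have hq : y + e n j = (x + e n j) + d := by rw [hy]; abel
      rw [hq]
      exact adj_add_dd _ i hε
    have hadjm : (grid n).Adj (x - e n j) (y - e n j) := by
      have hq : y - e n j = (x - e n j) + d := by rw [hy]; abel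
      rw [hq]
      exact adj_add_dd _ i hε
    have hw1 : (0:ℝ) ≤ w x (x + e n j) := (W.pos _ _ (adj_add_e x j)).le
    have hw1' : (0:ℝ) ≤ w x (x - e n j) := (W.pos _ _ (adj_sub_e x j)).le
    -- b bounds
    have hbp : |(f (y + e n j) : ℝ) - (f y : ℝ)| ≤ 1 := by
      have := lip1_adj hf (adj_add_e y j)
      have h' : |f (y + e n j) - f y| ≤ 1 := by rw [abs_sub_comm] at this; exact this
      exact_mod_cast h'
    have hbm : |(f (y - e n j) : ℝ) - (f y : ℝ)| ≤ 1 := by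
      have := lip1_adj hf (adj_sub_e y j)
      have h' : |f (y - e n j) - f y| ≤ 1 := by rw [abs_sub_comm] at this; exact this
      exact_mod_cast h'
    have habp : (f (y + e n j) : ℝ) - f y ≤ (f (x + e n j) : ℝ) - f x := by
      have h1 := lip1_adj hf hadjp
      rw [abs_le] at h1
      have : f (y + e n j) - f y ≤ f (x + e n j) - f x := by omega
      exact_mod_cast this
    have habm : (f (y - e n j) : ℝ) - f y ≤ (f (x - e n j) : ℝ) - f x := by
      have h1 := lip1_adj hf hadjm
      rw [abs_le] at h1
      have : f (y - e n j) - f y ≤ f (x - e n j) - f x := by omega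
      exact_mod_cast this
    have k1 := key_ineq (w x (x + e n j)) (w y (y + e n j)) hw1
      ((f (x + e n j) : ℝ) - f x) ((f (y + e n j) : ℝ) - f y) hbp habp
    have k2 := key_ineq (w x (x - e n j)) (w y (y - e n j)) hw1'
      ((f (x - e n j) : ℝ) - f x) ((f (y - e n j) : ℝ) - f y) hbm habm
    linarith

end ScalAux3
section ScalAux4

variable {n : ℕ}

/-- Integer sign used to pick the optimal Lipschitz function. -/
def sgnR (w1 w2 : ℝ) : ℤ := if w1 < w2 then 1 else if w2 < w1 then -1 else 0

lemma sgnR_abs_le (w1 w2 : ℝ) : |sgnR w1 w2| ≤ 1 := by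
  unfold sgnR; split_ifs <;> decide

lemma sgnR_spec (w1 w2 : ℝ) : (w1 - w2) * ((sgnR w1 w2 : ℤ) : ℝ) = -|w1 - w2| := by
  unfold sgnR
  split_ifs with h1 h2
  · push_cast
    rw [abs_of_neg (by linarith : w1 - w2 < 0)]
    ring
  · push_cast
    rw [abs_of_pos (by linarith : 0 < w1 - w2)]
    ring
  · have h3 : w1 = w2 := le_antisymm (not_lt.1 h2) (not_lt.1 h1)
    rw [h3]
    simp

lemma abs_mul_le_one {s t : ℤ} (hs : |s| ≤ 1) (ht : |t| ≤ 1) : |s * t| ≤ 1 := by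
  rw [abs_mul]
  calc |s| * |t| ≤ 1 * 1 := mul_le_mul hs ht (abs_nonneg _) zero_le_one
  _ = 1 := one_mul 1

lemma cl_sub_abs (u v : ℤ) : |cl u - cl v| ≤ 1 := by
  have h1 := cl_nonneg u
  have h2 := cl_le_one u
  have h3 := cl_nonneg v
  have h4 := cl_le_one v
  rw [abs_le]
  omega

lemma Kdec {i : Fin n} (A : ℝ) (B : Fin n → ℝ) :
    A - (∑ j, if j ≠ i then B j else 0)
      = ∑ j, ((if j = i then A else 0) - (if j ≠ i then B j else 0)) := by
  rw [Finset.sum_sub_distrib]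
  congr 1
  simp

lemma kappa_mem (W : GridWeight n) (x : Fin n → ℤ) (i : Fin n) (ε : ℤ)
    (hε : ε = 1 ∨ ε = -1) :
    ∃ f : (Fin n → ℤ) → ℤ, Lip1 (grid n) f ∧ f (x + dd n i ε) = f x + 1 ∧
      lap (grid n) W.w f x - lap (grid n) W.w f (x + dd n i ε) =
        2 * W.w x (x + dd n i ε) - W.w x (x - dd n i ε)
          - W.w (x + dd n i ε) (x + dd n i ε + dd n i ε)
          - (∑ j, (if j ≠ i then
              |W.w x (x + e n j) - W.w (x + dd n i ε) (x + dd n i ε + e n j)| +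
              |W.w x (x - e n j) - W.w (x + dd n i ε) (x + dd n i ε - e n j)| else 0)) := by
  have hεε : ε * ε = 1 := by rcases hε with rfl | rfl <;> norm_num
  have hεabs : |ε| = 1 := by rcases hε with rfl | rfl <;> decide
  set w := W.w with hw
  set d := dd n i ε with hd
  set y := x + d with hy
  set sp : Fin n → ℤ := fun j => sgnR (w x (x + e n j)) (w y (y + e n j)) with hsp
  set sm : Fin n → ℤ := fun j => sgnR (w x (x - e n j)) (w y (y - e n j)) with hsm
  set f : (Fin n → ℤ) → ℤ := fun z =>
    ε * (z i - x i) + ∑ j, (if j = i then 0 else sp j * cl (z j - x j) + sm j * cl (x j - z j))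
    with hfdef
  have hdi : d i = ε := by rw [hd]; simp [dd]
  have hdj : ∀ j, j ≠ i → d j = 0 := by intro j hj; rw [hd]; simp [dd, hj]
  -- value computations
  have P1 : f x = 0 := by
    show ε * (x i - x i) + (∑ j, (if j = i then 0
        else sp j * cl (x j - x j) + sm j * cl (x j - x j))) = 0
    rw [sub_self, mul_zero, zero_add, Finset.sum_eq_zero]
    intro j _
    by_cases h : j = i
    · rw [if_pos h]
    · rw [if_neg h, sub_self, cl_zero]; ring
  have P2 : f y = 1 := by
    show ε * (y i - x i) + (∑ j, (if j = i then 0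
        else sp j * cl (y j - x j) + sm j * cl (x j - y j))) = 1
    have h1 : y i - x i = ε := by rw [hy]; simp [hdi]
    rw [h1, hεε, Finset.sum_eq_zero, add_zero]
    intro j _
    by_cases h : j = i
    · rw [if_pos h]
    · rw [if_neg h]
      have h2 : y j - x j = 0 := by rw [hy]; simp [hdj j h]
      have h3 : x j - y j = 0 := by rw [hy]; simp [hdj j h]
      rw [h2, h3, cl_zero]; ring
  have P3 : f (x - d) = -1 := by
    show ε * ((x - d) i - x i) + (∑ j, (if j = i then 0
        else sp j * cl ((x - d) j - x j) + sm j * cl (x j - (x - d) j))) = -1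
    have h1 : (x - d) i - x i = -ε := by simp [hdi]
    rw [h1, Finset.sum_eq_zero, add_zero]
    · rw [mul_neg, hεε]
    intro j _
    by_cases h : j = i
    · rw [if_pos h]
    · rw [if_neg h]
      have h2 : (x - d) j - x j = 0 := by simp [hdj j h]
      have h3 : x j - (x - d) j = 0 := by simp [hdj j h]
      rw [h2, h3, cl_zero]; ring
  have P4 : f (y + d) = 2 := by
    show ε * ((y + d) i - x i) + (∑ j, (if j = i then 0
        else sp j * cl ((y + d) j - x j) + sm j * cl (x j - (y + d) j))) = 2
    have h1 : (y + d) i - x i = ε + ε := by rw [hy]; simp [hdi]; ring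
    rw [h1, Finset.sum_eq_zero, add_zero]
    · rw [mul_add, hεε]; norm_num
    intro j _
    by_cases h : j = i
    · rw [if_pos h]
    · rw [if_neg h]
      have h2 : (y + d) j - x j = 0 := by rw [hy]; simp [hdj j h]
      have h3 : x j - (y + d) j = 0 := by rw [hy]; simp [hdj j h]
      rw [h2, h3, cl_zero]; ring
  have P5 : ∀ j, j ≠ i → f (x + e n j) = sp j := by
    intro j hj
    show ε * ((x + e n j) i - x i) + (∑ k, (if k = i then 0
        else sp k * cl ((x + e n j) k - x k) + sm k * cl (x k - (x + e n j) k))) = sp j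
    have h1 : (x + e n j) i - x i = 0 := by
      have hij : ¬ i = j := fun h => hj h.symm
      simp [e, hij]
    rw [h1, mul_zero, zero_add, Finset.sum_eq_single j]
    · rw [if_neg hj]
      have ha : (x + e n j) j - x j = 1 := by simp [e]
      have hb : x j - (x + e n j) j = -1 := by simp [e]
      rw [ha, hb, cl_one, cl_neg_one, mul_one, mul_zero, add_zero]
    · intro k _ hk
      by_cases h : k = i
      · rw [if_pos h]
      · rw [if_neg h]
        have ha : (x + e n j) k - x k = 0 := by simp [e, hk]
        have hb : x k - (x + e n j) k = 0 := by simp [e, hk]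
        rw [ha, hb, cl_zero]; ring
    · intro h; exact absurd (Finset.mem_univ j) h
  have P6 : ∀ j, j ≠ i → f (x - e n j) = sm j := by
    intro j hj
    show ε * ((x - e n j) i - x i) + (∑ k, (if k = i then 0
        else sp k * cl ((x - e n j) k - x k) + sm k * cl (x k - (x - e n j) k))) = sm j
    have h1 : (x - e n j) i - x i = 0 := by
      have hij : ¬ i = j := fun h => hj h.symm
      simp [e, hij]
    rw [h1, mul_zero, zero_add, Finset.sum_eq_single j]
    · rw [if_neg hj]
      have ha : (x - e n j) j - x j = -1 := by simp [e]
      have hb : x j - (x - e n j) j = 1 := by simp [e]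
      rw [ha, hb, cl_one, cl_neg_one, mul_one, mul_zero, zero_add]
    · intro k _ hk
      by_cases h : k = i
      · rw [if_pos h]
      · rw [if_neg h]
        have ha : (x - e n j) k - x k = 0 := by simp [e, hk]
        have hb : x k - (x - e n j) k = 0 := by simp [e, hk]
        rw [ha, hb, cl_zero]; ring
    · intro h; exact absurd (Finset.mem_univ j) h
  have P7 : ∀ j, j ≠ i → f (y + e n j) = 1 + sp j := by
    intro j hj
    show ε * ((y + e n j) i - x i) + (∑ k, (if k = i then 0
        else sp k * cl ((y + e n j) k - x k) + sm k * cl (x k - (y + e n j) k))) = 1 + sp j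
    have h1 : (y + e n j) i - x i = ε := by
      have hij : ¬ i = j := fun h => hj h.symm
      rw [hy]
      simp [e, hdi, hij]
    rw [h1, hεε, Finset.sum_eq_single j]
    · rw [if_neg hj]
      have ha : (y + e n j) j - x j = 1 := by rw [hy]; simp [e, hdj j hj]
      have hb : x j - (y + e n j) j = -1 := by rw [hy]; simp [e, hdj j hj]
      rw [ha, hb, cl_one, cl_neg_one, mul_one, mul_zero, add_zero]
    · intro k _ hk
      by_cases h : k = i
      · rw [if_pos h]
      · rw [if_neg h]
        have ha : (y + e n j) k - x k = 0 := by rw [hy]; simp [e, hk, hdj k h]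
        have hb : x k - (y + e n j) k = 0 := by rw [hy]; simp [e, hk, hdj k h]
        rw [ha, hb, cl_zero]; ring
    · intro h; exact absurd (Finset.mem_univ j) h
  have P8 : ∀ j, j ≠ i → f (y - e n j) = 1 + sm j := by
    intro j hj
    show ε * ((y - e n j) i - x i) + (∑ k, (if k = i then 0
        else sp k * cl ((y - e n j) k - x k) + sm k * cl (x k - (y - e n j) k))) = 1 + sm j
    have h1 : (y - e n j) i - x i = ε := by
      have hij : ¬ i = j := fun h => hj h.symm
      rw [hy]
      simp [e, hdi, hij]
    rw [h1, hεε, Finset.sum_eq_single j]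
    · rw [if_neg hj]
      have ha : (y - e n j) j - x j = -1 := by rw [hy]; simp [e, hdj j hj]
      have hb : x j - (y - e n j) j = 1 := by rw [hy]; simp [e, hdj j hj]
      rw [ha, hb, cl_one, cl_neg_one, mul_one, mul_zero, zero_add]
    · intro k _ hk
      by_cases h : k = i
      · rw [if_pos h]
      · rw [if_neg h]
        have ha : (y - e n j) k - x k = 0 := by rw [hy]; simp [e, hk, hdj k h]
        have hb : x k - (y - e n j) k = 0 := by rw [hy]; simp [e, hk, hdj k h]
        rw [ha, hb, cl_zero]; ring
    · intro h; exact absurd (Finset.mem_univ j) h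
  -- Lipschitz property
  have hstep : ∀ a b, (grid n).Adj a b → |f a - f b| ≤ 1 := by
    intro a b hab
    obtain ⟨k₀, h1, h0⟩ := exists_coord hab
    have hdiff : f a - f b = ε * (a i - b i)
        + ∑ j, (if j = i then 0 else sp j * (cl (a j - x j) - cl (b j - x j))
            + sm j * (cl (x j - a j) - cl (x j - b j))) := by
      have hsum : (∑ j, (if j = i then 0 else sp j * cl (a j - x j) + sm j * cl (x j - a j)))
          - (∑ j, (if j = i then 0 else sp j * cl (b j - x j) + sm j * cl (x j - b j)))
          = ∑ j, (if j = i then 0 else sp j * (cl (a j - x j) - cl (b j - x j))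
              + sm j * (cl (x j - a j) - cl (x j - b j))) := by
        rw [← Finset.sum_sub_distrib]
        refine Finset.sum_congr rfl fun j _ => ?_
        by_cases h : j = i
        · rw [if_pos h, if_pos h, if_pos h]; ring
        · rw [if_neg h, if_neg h, if_neg h]; ring
      show (ε * (a i - x i) + _) - (ε * (b i - x i) + _) = _
      rw [← hsum]
      ring
    by_cases hk : k₀ = i
    · subst hk
      rw [hdiff, Finset.sum_eq_zero, add_zero]
      · rw [abs_mul, hεabs, one_mul, h1]
      intro j _
      by_cases h : j = k₀
      · rw [if_pos h]
      · rw [if_neg h, h0 j h]; ring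
    · have hai : a i = b i := h0 i (fun h => hk h.symm)
      rw [hdiff, hai, sub_self, mul_zero, zero_add, Finset.sum_eq_single k₀]
      · rw [if_neg hk]
        have hab' : a k₀ = b k₀ + 1 ∨ b k₀ = a k₀ + 1 := by
          rcases (abs_eq (by norm_num : (0:ℤ) ≤ 1)).1 h1 with h | h
          · left; omega
          · right; omega
        have hsp1 : |sp k₀| ≤ 1 := sgnR_abs_le _ _
        have hsm1 : |sm k₀| ≤ 1 := sgnR_abs_le _ _
        rcases cl_pair (a k₀) (b k₀) (x k₀) hab' with h | h
        · rw [h, mul_zero, zero_add]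
          exact abs_mul_le_one hsm1 (cl_sub_abs _ _)
        · rw [h, mul_zero, add_zero]
          exact abs_mul_le_one hsp1 (cl_sub_abs _ _)
      · intro j _ hjk
        by_cases h : j = i
        · rw [if_pos h]
        · rw [if_neg h, h0 j hjk]; ring
      · intro h; exact absurd (Finset.mem_univ k₀) h
  refine ⟨f, lip1_of_step f hstep, by rw [P2, P1]; norm_num, ?_⟩
  rw [lap_eq, lap_eq, ← Finset.sum_sub_distrib,
    Kdec (2 * w x y - w x (x - d) - w y (y + d))
      (fun j => |w x (x + e n j) - w y (y + e n j)| + |w x (x - e n j) - w y (y - e n j)|)]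
  refine Finset.sum_congr rfl fun j _ => ?_
  by_cases hj : j = i
  · subst hj
    rw [if_pos rfl, if_neg (fun h => h rfl), sub_zero]
    have hsymm : w y x = w x y := W.symm y x
    rcases hε with rfl | rfl
    · have he : d = e n j := dd_one j
      have hyd : y - d = x := by rw [hy]; abel
      rw [← he, ← hy, hyd, P1, P2, P3, P4, hsymm]
      push_cast
      ring
    · have he : e n j = -d := by rw [hd, dd_neg_one]; ring
      have q1 : x + e n j = x - d := by rw [he]; abel
      have q2 : x - e n j = y := by rw [he, hy]; abel
      have q3 : y + e n j = x := by rw [he, hy]; abel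
      have q4 : y - e n j = y + d := by rw [he]; abel
      rw [q1, q2, q3, q4, P1, P2, P3, P4, hsymm]
      push_cast
      ring
  · rw [if_neg hj, if_pos hj, zero_sub]
    rw [P1, P2, P5 j hj, P6 j hj, P7 j hj, P8 j hj]
    have s1 : (w x (x + e n j) - w y (y + e n j)) * ((sp j : ℤ) : ℝ)
        = -|w x (x + e n j) - w y (y + e n j)| := sgnR_spec _ _
    have s2 : (w x (x - e n j) - w y (y - e n j)) * ((sm j : ℤ) : ℝ)
        = -|w x (x - e n j) - w y (y - e n j)| := sgnR_spec _ _
    push_cast at s1 s2 ⊢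
    linear_combination s1 + s2

end ScalAux4
section ScalAux5

variable {n : ℕ}

lemma kappa_formula (W : GridWeight n) (x : Fin n → ℤ) (i : Fin n) (ε : ℤ)
    (hε : ε = 1 ∨ ε = -1) :
    kappa (grid n) W.w x (x + dd n i ε) =
      2 * W.w x (x + dd n i ε) - W.w x (x - dd n i ε)
        - W.w (x + dd n i ε) (x + dd n i ε + dd n i ε)
        - (∑ j, (if j ≠ i then
            |W.w x (x + e n j) - W.w (x + dd n i ε) (x + dd n i ε + e n j)| +
            |W.w x (x - e n j) - W.w (x + dd n i ε) (x + dd n i ε - e n j)| else 0)) := by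
  obtain ⟨f₀, hf₀, hfy₀, heq₀⟩ := kappa_mem W x i ε hε
  have hmem : (2 * W.w x (x + dd n i ε) - W.w x (x - dd n i ε)
        - W.w (x + dd n i ε) (x + dd n i ε + dd n i ε)
        - (∑ j, (if j ≠ i then
            |W.w x (x + e n j) - W.w (x + dd n i ε) (x + dd n i ε + e n j)| +
            |W.w x (x - e n j) - W.w (x + dd n i ε) (x + dd n i ε - e n j)| else 0)))
      ∈ {r | ∃ f : (Fin n → ℤ) → ℤ, Lip1 (grid n) f ∧ f (x + dd n i ε) = f x + 1 ∧
          r = lap (grid n) W.w f x - lap (grid n) W.w f (x + dd n i ε)} :=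
    ⟨f₀, hf₀, hfy₀, heq₀.symm⟩
  have hlb : ∀ r ∈ {r | ∃ f : (Fin n → ℤ) → ℤ, Lip1 (grid n) f ∧ f (x + dd n i ε) = f x + 1 ∧
      r = lap (grid n) W.w f x - lap (grid n) W.w f (x + dd n i ε)},
      2 * W.w x (x + dd n i ε) - W.w x (x - dd n i ε)
        - W.w (x + dd n i ε) (x + dd n i ε + dd n i ε)
        - (∑ j, (if j ≠ i then
            |W.w x (x + e n j) - W.w (x + dd n i ε) (x + dd n i ε + e n j)| +
            |W.w x (x - e n j) - W.w (x + dd n i ε) (x + dd n i ε - e n j)| else 0)) ≤ r := by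
    rintro r ⟨f, hf, hfy, rfl⟩
    exact kappa_lower W x i ε hε f hf hfy
  exact le_antisymm (csInf_le ⟨_, hlb⟩ hmem) (le_csInf ⟨_, hmem⟩ hlb)

end ScalAux5

/-- the scalar curvature formula on a weighted grid graph. -/
theorem scal_grid_formula (n : ℕ) (W : GridWeight n) (x : Fin n → ℤ) :
    scal (grid n) W.w x =
      (∑ i, (W.w x (x + e n i) - W.w (x + e n i) (x + e n i + e n i) +
             W.w x (x - e n i) - W.w (x - e n i) (x - e n i - e n i))) - Absf n W.w x := by
  rw [scal_eq]
  have kp : ∀ i : Fin n, kappa (grid n) W.w x (x + e n i)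
      = 2 * W.w x (x + e n i) - W.w x (x - e n i) - W.w (x + e n i) (x + e n i + e n i)
        - (∑ j, (if j ≠ i then
            |W.w x (x + e n j) - W.w (x + e n i) (x + e n i + e n j)| +
            |W.w x (x - e n j) - W.w (x + e n i) (x + e n i - e n j)| else 0)) := by
    intro i
    have h := kappa_formula W x i 1 (Or.inl rfl)
    rwa [dd_one] at h
  have km : ∀ i : Fin n, kappa (grid n) W.w x (x - e n i)
      = 2 * W.w x (x - e n i) - W.w x (x + e n i) - W.w (x - e n i) (x - e n i - e n i)
        - (∑ j, (if j ≠ i then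
            |W.w x (x + e n j) - W.w (x - e n i) (x - e n i + e n j)| +
            |W.w x (x - e n j) - W.w (x - e n i) (x - e n i - e n j)| else 0)) := by
    intro i
    have h := kappa_formula W x i (-1) (Or.inr rfl)
    rw [dd_neg_one i] at h
    simp only [← sub_eq_add_neg, sub_neg_eq_add] at h
    exact h
  have h1 : ∀ i ∈ Finset.univ, kappa (grid n) W.w x (x + e n i) + kappa (grid n) W.w x (x - e n i)
      = (W.w x (x + e n i) - W.w (x + e n i) (x + e n i + e n i) +
          W.w x (x - e n i) - W.w (x - e n i) (x - e n i - e n i))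
        - ((∑ j, (if j ≠ i then
            |W.w x (x + e n j) - W.w (x + e n i) (x + e n i + e n j)| +
            |W.w x (x - e n j) - W.w (x + e n i) (x + e n i - e n j)| else 0))
          + (∑ j, (if j ≠ i then
            |W.w x (x + e n j) - W.w (x - e n i) (x - e n i + e n j)| +
            |W.w x (x - e n j) - W.w (x - e n i) (x - e n i - e n j)| else 0))) := by
    intro i _
    rw [kp i, km i]
    ring
  rw [Finset.sum_congr rfl h1, Finset.sum_sub_distrib]
  congr 1
  have h2 : ∀ i ∈ Finset.univ, (∑ j, (if j ≠ i then
        |W.w x (x + e n j) - W.w (x + e n i) (x + e n i + e n j)| +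
        |W.w x (x - e n j) - W.w (x + e n i) (x + e n i - e n j)| else 0))
      + (∑ j, (if j ≠ i then
        |W.w x (x + e n j) - W.w (x - e n i) (x - e n i + e n j)| +
        |W.w x (x - e n j) - W.w (x - e n i) (x - e n i - e n j)| else 0))
      = ∑ j, (if j ≠ i then
        |W.w x (x + e n j) - W.w (x + e n i) (x + e n i + e n j)| +
        |W.w x (x - e n j) - W.w (x + e n i) (x + e n i - e n j)| +
        |W.w x (x + e n j) - W.w (x - e n i) (x - e n i + e n j)| +
        |W.w x (x - e n j) - W.w (x - e n i) (x - e n i - e n j)| else 0) := by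
    intro i _
    rw [← Finset.sum_add_distrib]
    refine Finset.sum_congr rfl fun j _ => ?_
    by_cases h : j ≠ i
    · rw [if_pos h, if_pos h, if_pos h]
      ring
    · rw [if_neg h, if_neg h, if_neg h]
      norm_num
  rw [Finset.sum_congr rfl h2]
  simp only [Absf]
  rw [Finset.sum_comm]
  refine Finset.sum_congr rfl fun a _ => Finset.sum_congr rfl fun b _ => ?_
  by_cases h : a ≠ b
  · rw [if_pos h, if_pos h]
    ring
  · rw [if_neg h, if_neg h]


end PMT
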